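/- For any starting digit d, every digit appearing in any term of the look-and-say-again sequence with seed d belongs to the set {1, 2, 4, 6, d}. -/

import Mathlib

/-- Run-length encoding of a digit string (a list of digits). -/
def rle : List ℕ → List (ℕ × ℕ)
  | [] => []
  | a :: t =>
    match rle t with
    | [] => [(a, 1)]
    | (b, n) :: r => if a = b then (a, n + 1) :: r else (a, 1) :: (b, n) :: r

/-- `P` is a run-length representation of the digit string `S`:
multiplicities are positive, adjacent base digits are distinct, and `S` is
the concatenation of the runs. -/
def IsRLE (S : List ℕ) (P : List (ℕ × ℕ)) : Prop :=
  (∀ p ∈ P, 1 ≤ p.2) ∧ List.Chain' (fun p q => p.1 ≠ q.1) P ∧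
    S = (P.map fun p => List.replicate p.2 p.1).flatten

/-- The look-and-say-again step: each run `a^n` is read off as `n n a a`. -/
def lsa (T : List ℕ) : List ℕ := (rle T).flatMap fun p => [p.2, p.2, p.1, p.1]

/-- Property `P`: every run has base digit in `{1,2,4,6}` and length in `{2,4,6}`. -/
def propP (T : List ℕ) : Prop :=
  ∀ p ∈ rle T, p.1 ∈ ({1, 2, 4, 6} : Set ℕ) ∧ p.2 ∈ ({2, 4, 6} : Set ℕ)

lemma rle_cons (a : ℕ) (t : List ℕ) :
    rle (a :: t) = match rle t with
      | [] => [(a, 1)]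
      | (b, n) :: r => if a = b then (a, n + 1) :: r else (a, 1) :: (b, n) :: r := rfl

lemma rle_cons_of_eq {t : List ℕ} {b n r} (h : rle t = (b, n) :: r) (a : ℕ) (hab : a = b) :
    rle (a :: t) = (a, n + 1) :: r := by
  rw [rle_cons, h]; simp [hab]

lemma rle_cons_of_ne {t : List ℕ} {b n r} (h : rle t = (b, n) :: r) (a : ℕ) (hab : a ≠ b) :
    rle (a :: t) = (a, 1) :: (b, n) :: r := by
  rw [rle_cons, h]; simp [hab]

lemma rle_fst_mem {T : List ℕ} {p : ℕ × ℕ} (h : p ∈ rle T) : p.1 ∈ T := by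
  induction T with
  | nil => simp [rle] at h
  | cons a t ih =>
    rw [rle_cons] at h
    rcases hr : rle t with _ | ⟨⟨b, n⟩, r⟩
    · rw [hr] at h; simp at h; simp [h]
    · rw [hr] at h
      by_cases hab : a = b
      · simp only [if_pos hab] at h
        rcases List.mem_cons.mp h with h | h
        · simp [h]
        · right; exact ih (hr ▸ List.mem_cons_of_mem _ h)
      · simp only [if_neg hab] at h
        rcases List.mem_cons.mp h with h | h
        · simp [h]
        · right; exact ih (hr ▸ h)

lemma rle_chain' (T : List ℕ) : List.Chain' (fun p q : ℕ × ℕ => p.1 ≠ q.1) (rle T) := by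
  induction T with
  | nil => simp [rle, List.Chain']
  | cons a t ih =>
    rw [rle_cons]
    rcases hr : rle t with _ | ⟨⟨b, n⟩, r⟩
    · simp [List.Chain']
    · rw [hr] at ih
      by_cases hab : a = b
      · simp only [if_pos hab]
        rcases r with _ | ⟨⟨c, m⟩, r'⟩
        · simp [List.Chain']
        · simp only [List.Chain', List.isChain_cons_cons] at ih ⊢
          exact ⟨hab ▸ ih.1, ih.2⟩
      · simp only [if_neg hab]
        exact List.isChain_cons_cons.mpr ⟨hab, ih⟩

/-- Key structural lemma: for a nonempty run list with adjacent-distinct digits,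
the rle of its look-and-say-again readout starts with digit `n` (the first count),
has head count in `{2,4,6}` (with ≥4 only if `n = a`), and all other counts in `{2,4,6}`. -/
lemma key (L : List (ℕ × ℕ)) (hc : List.Chain' (fun p q : ℕ × ℕ => p.1 ≠ q.1) L) :
    ∀ a n L', L = (a, n) :: L' →
    ∃ m r, rle (L.flatMap fun p => [p.2, p.2, p.1, p.1]) = (n, m) :: r ∧
      (m = 2 ∨ (m = 4 ∧ n = a) ∨ (m = 6 ∧ n = a)) ∧
      ∀ q ∈ r, q.2 = 2 ∨ q.2 = 4 ∨ q.2 = 6 := by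
  induction L with
  | nil => intro a n L' h; exact absurd h (by simp)
  | cons p L' ih =>
    intro a n L'' h
    rw [List.cons_eq_cons] at h
    obtain ⟨rfl, rfl⟩ := h
    have hflat : ((a, n) :: L').flatMap (fun p => [p.2, p.2, p.1, p.1])
        = n :: n :: a :: a :: (L'.flatMap fun p => [p.2, p.2, p.1, p.1]) := by
      simp [List.flatMap_cons]
    rcases L' with _ | ⟨⟨a₂, n₂⟩, L''⟩
    · -- single run
      by_cases hna : n = a
      · subst hna
        refine ⟨4, [], ?_, by tauto, by simp⟩
        rw [hflat]; simp [rle]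
      · refine ⟨2, [(a, 2)], ?_, by tauto, by simp⟩
        rw [hflat]
        simp [rle, hna]
    · -- at least two runs
      have hc' : List.Chain' (fun p q : ℕ × ℕ => p.1 ≠ q.1) ((a₂, n₂) :: L'') :=
        (List.isChain_cons_cons.mp hc).2
      have haa₂ : a ≠ a₂ := (List.isChain_cons_cons.mp hc).1
      obtain ⟨m₂, r₂, hrec, hm₂, hr₂⟩ := ih hc' a₂ n₂ L'' rfl
      set F := ((a₂, n₂) :: L'').flatMap (fun p => [p.2, p.2, p.1, p.1]) with hF
      rw [hflat]
      by_cases han₂ : a = n₂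
      · -- the `a a` block merges with head of recursive rle
        have hm₂2 : m₂ = 2 := by
          rcases hm₂ with h | ⟨_, h⟩ | ⟨_, h⟩
          · exact h
          · exact absurd (han₂.trans h) haa₂
          · exact absurd (han₂.trans h) haa₂
        subst hm₂2
        have h1 : rle (a :: F) = (a, 3) :: r₂ := rle_cons_of_eq hrec a han₂
        have h2 : rle (a :: a :: F) = (a, 4) :: r₂ := rle_cons_of_eq h1 a rfl
        by_cases hna : n = a
        · subst hna
          have h3 : rle (n :: n :: n :: F) = (n, 5) :: r₂ := rle_cons_of_eq h2 n rfl
          have h4 : rle (n :: n :: n :: n :: F) = (n, 6) :: r₂ := rle_cons_of_eq h3 n rfl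
          exact ⟨6, r₂, h4, by tauto, hr₂⟩
        · have h3 : rle (n :: a :: a :: F) = (n, 1) :: (a, 4) :: r₂ := rle_cons_of_ne h2 n hna
          have h4 : rle (n :: n :: a :: a :: F) = (n, 2) :: (a, 4) :: r₂ :=
            rle_cons_of_eq h3 n rfl
          refine ⟨2, (a, 4) :: r₂, h4, by tauto, ?_⟩
          intro q hq
          rcases List.mem_cons.mp hq with h | h
          · simp [h]
          · exact hr₂ q h
      · -- no merge at the boundary
        have h1 : rle (a :: F) = (a, 1) :: (n₂, m₂) :: r₂ := rle_cons_of_ne hrec a han₂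
        have h2 : rle (a :: a :: F) = (a, 2) :: (n₂, m₂) :: r₂ := rle_cons_of_eq h1 a rfl
        by_cases hna : n = a
        · subst hna
          have h3 : rle (n :: n :: n :: F) = (n, 3) :: (n₂, m₂) :: r₂ := rle_cons_of_eq h2 n rfl
          have h4 : rle (n :: n :: n :: n :: F) = (n, 4) :: (n₂, m₂) :: r₂ := rle_cons_of_eq h3 n rfl
          refine ⟨4, (n₂, m₂) :: r₂, h4, by tauto, ?_⟩
          intro q hq
          rcases List.mem_cons.mp hq with h | h
          · rcases hm₂ with h2 | ⟨h2, _⟩ | ⟨h2, _⟩ <;> simp [h, h2]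
          · exact hr₂ q h
        · have h3 : rle (n :: a :: a :: F) = (n, 1) :: (a, 2) :: (n₂, m₂) :: r₂ :=
            rle_cons_of_ne h2 n hna
          have h4 : rle (n :: n :: a :: a :: F) = (n, 2) :: (a, 2) :: (n₂, m₂) :: r₂ :=
            rle_cons_of_eq h3 n rfl
          refine ⟨2, (a, 2) :: (n₂, m₂) :: r₂, h4, by tauto, ?_⟩
          intro q hq
          rcases List.mem_cons.mp hq with h | h
          · rw [h]; tauto
          rcases List.mem_cons.mp h with h | h
          · rw [h]; simp only; tauto
          · exact hr₂ q h

lemma counts_lsa (T : List ℕ) : ∀ q ∈ rle (lsa T), q.2 = 2 ∨ q.2 = 4 ∨ q.2 = 6 := by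
  unfold lsa
  rcases hL : rle T with _ | ⟨⟨a, n⟩, L'⟩
  · simp [rle]
  · obtain ⟨m, r, heq, hm, hr⟩ := key _ (hL ▸ rle_chain' T) a n L' rfl
    rw [heq]
    intro q hq
    rcases List.mem_cons.mp hq with h | h
    · rcases hm with h2 | ⟨h2, _⟩ | ⟨h2, _⟩ <;> simp [h, h2]
    · exact hr q h

/-- Every digit of every term of the look-and-say-again sequence with seed `d`
belongs to `{1, 2, 4, 6, d}`. -/
theorem lsa_seq_digits (d : ℕ) (hd : d ≤ 9) :
    ∀ n : ℕ, ∀ x ∈ lsa^[n] [d], x ∈ ({1, 2, 4, 6, d} : Set ℕ) := by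
  have main : ∀ n : ℕ, (∀ x ∈ lsa^[n] [d], x = 1 ∨ x = 2 ∨ x = 4 ∨ x = 6 ∨ x = d) ∧
      (∀ q ∈ rle (lsa^[n] [d]), q.2 = 1 ∨ q.2 = 2 ∨ q.2 = 4 ∨ q.2 = 6) := by
    intro n
    induction n with
    | zero =>
      constructor
      · intro x hx; simp at hx; tauto
      · intro q hq; simp [rle] at hq; simp [hq]
    | succ n ih =>
      rw [Function.iterate_succ_apply']
      constructor
      · intro x hx
        unfold lsa at hx
        rw [List.mem_flatMap] at hx
        obtain ⟨p, hp, hx⟩ := hx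
        simp at hx
        rcases hx with h | h
        · rcases ih.2 p hp with h2 | h2 | h2 | h2 <;> simp [h, h2]
        · rcases ih.1 p.1 (rle_fst_mem hp) with h2 | h2 | h2 | h2 | h2 <;>
            simp [h, h2]
      · intro q hq
        rcases counts_lsa _ q hq with h | h | h <;> simp [h]
  intro n x hx
  rcases (main n).1 x hx with h | h | h | h | h <;> simp [h]
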